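/- For a finite group G, the set H(G) is exactly the conjugation orbit of λ(G) under NHol(G), i.e. H(G) = {β λ(G) β⁻¹ : β ∈ NHol(G)}, and the cardinality of H(G) equals the index [NHol(G) : Hol(G)]. -/

import Mathlib

open Equiv Pointwise

/-- A subgroup `N ≤ Perm X` is regular if for all `x y : X` there is exactly one
element of `N` sending `x` to `y`. -/
def IsRegularSubgroup {X : Type*} (N : Subgroup (Equiv.Perm X)) : Prop :=
  ∀ x y : X, ∃! η : N, (η : Equiv.Perm X) x = y

/-- The image `λ(G)` of the left regular representation `λ : G → Perm G`. -/
def lamG (G : Type*) [Group G] : Subgroup (Equiv.Perm G) :=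
  (MulAction.toPermHom G G).range

/-- The holomorph `Hol(G) = Norm_B(λ(G))`. -/
def Hol (G : Type*) [Group G] : Subgroup (Equiv.Perm G) :=
  Subgroup.normalizer (lamG G : Set (Equiv.Perm G))

/-- `H(G)`: regular subgroups isomorphic to `G` whose normalizer is `Hol(G)`. -/
def HClass (G : Type*) [Group G] : Set (Subgroup (Equiv.Perm G)) :=
  {N | IsRegularSubgroup N ∧ Nonempty (N ≃* G) ∧ Subgroup.normalizer (N : Set (Equiv.Perm G)) = Hol G}

/-- `S(G)`: regular subgroups isomorphic to `G` contained in `Hol(G)`. -/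
def SClass (G : Type*) [Group G] : Set (Subgroup (Equiv.Perm G)) :=
  {N | IsRegularSubgroup N ∧ Nonempty (N ≃* G) ∧ N ≤ Hol G}

/-- `R(G)`: regular subgroups isomorphic to `G` normalized by `λ(G)`. -/
def RClass (G : Type*) [Group G] : Set (Subgroup (Equiv.Perm G)) :=
  {N | IsRegularSubgroup N ∧ Nonempty (N ≃* G) ∧ lamG G ≤ Subgroup.normalizer (N : Set (Equiv.Perm G))}

/-- `Q(G)`: members of `S(G) ∩ R(G)` normalized by every member of `S(G) ∩ R(G)`. -/
def QClass (G : Type*) [Group G] : Set (Subgroup (Equiv.Perm G)) :=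
  {M ∈ SClass G ∩ RClass G | ∀ N ∈ SClass G ∩ RClass G, N ≤ Subgroup.normalizer (M : Set (Equiv.Perm G))}

/-- Conjugate of a subgroup: `b N b⁻¹`. -/
def conjSub {H : Type*} [Group H] (b : H) (N : Subgroup H) : Subgroup H :=
  Subgroup.map (MulAut.conj b).toMonoidHom N

section ConjSubLemmas

variable {H : Type*} [Group H]

lemma mem_conjSub {b x : H} {N : Subgroup H} :
    x ∈ conjSub b N ↔ b⁻¹ * x * b ∈ N := by
  constructor
  · rintro ⟨n, hn, rfl⟩
    have : b⁻¹ * ((MulAut.conj b).toMonoidHom n) * b = n := by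
      simp [MulAut.conj_apply]; group
    rwa [this]
  · intro h
    refine ⟨b⁻¹ * x * b, h, ?_⟩
    simp [MulAut.conj_apply]; group

lemma conjSub_conjSub (a b : H) (N : Subgroup H) :
    conjSub a (conjSub b N) = conjSub (a * b) N := by
  ext x
  simp only [mem_conjSub, mul_inv_rev, mul_assoc]

lemma conjSub_one (N : Subgroup H) : conjSub (1 : H) N = N := by
  ext x; simp [mem_conjSub]

lemma conjSub_normalizer (b : H) (N : Subgroup H) :
    Subgroup.normalizer (conjSub b N : Set H) = conjSub b (Subgroup.normalizer (N : Set H)) :=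
  (Subgroup.map_equiv_normalizer_eq N (MulAut.conj b)).symm

lemma conjSub_eq_self_iff {b : H} {N : Subgroup H} :
    conjSub b N = N ↔ b ∈ Subgroup.normalizer (N : Set H) := by
  constructor
  · intro h
    rw [Subgroup.mem_normalizer_iff]
    intro n
    have hsimp : b⁻¹ * (b * n * b⁻¹) * b = n := by group
    constructor
    · intro hn
      rw [← h, mem_conjSub, hsimp]; exact hn
    · intro hn
      rw [← h, mem_conjSub, hsimp] at hn; exact hn
  · intro hb
    ext x
    rw [mem_conjSub]
    have := Subgroup.mem_normalizer_iff.mp hb (b⁻¹ * x * b)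
    have h2 : b * (b⁻¹ * x * b) * b⁻¹ = x := by group
    rw [h2] at this
    exact this

end ConjSubLemmas

section Main

variable {G : Type*} [Group G]

lemma lam_apply (g h : G) : (MulAction.toPermHom G G g) h = g * h := rfl

lemma lam_injective : Function.Injective (MulAction.toPermHom G G) := by
  intro a b h
  have := congrArg (fun e : Equiv.Perm G => e 1) h
  simpa [lam_apply] using this

lemma isRegular_lamG (G : Type*) [Group G] : IsRegularSubgroup (lamG G) := by
  intro x y
  refine ⟨⟨MulAction.toPermHom G G (y * x⁻¹), ⟨y * x⁻¹, rfl⟩⟩, ?_, ?_⟩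
  · show (MulAction.toPermHom G G (y * x⁻¹)) x = y
    rw [lam_apply, inv_mul_cancel_right]
  · rintro ⟨η, g, rfl⟩ hx
    have hx' : g * x = y := hx
    have : g = y * x⁻¹ := by rw [← hx']; group
    subst this
    rfl

lemma isRegular_conjSub {b : Equiv.Perm G} {N : Subgroup (Equiv.Perm G)}
    (h : IsRegularSubgroup N) : IsRegularSubgroup (conjSub b N) := by
  intro x y
  obtain ⟨η, hη, huniq⟩ := h (b⁻¹ x) (b⁻¹ y)
  have hmem : (b * (η : Equiv.Perm G) * b⁻¹) ∈ conjSub b N := by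
    rw [mem_conjSub]
    have : b⁻¹ * (b * (η : Equiv.Perm G) * b⁻¹) * b = (η : Equiv.Perm G) := by group
    rw [this]; exact η.2
  refine ⟨⟨b * (η : Equiv.Perm G) * b⁻¹, hmem⟩, ?_, ?_⟩
  · show (b * (η : Equiv.Perm G) * b⁻¹) x = y
    have : (η : Equiv.Perm G) (b⁻¹ x) = b⁻¹ y := hη
    rw [Equiv.Perm.mul_apply, Equiv.Perm.mul_apply, this]; exact b.apply_symm_apply y
  · rintro ⟨ζ, hζ⟩ (hz : ζ x = y)
    rw [mem_conjSub] at hζ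
    have happ : (b⁻¹ * ζ * b) (b⁻¹ x) = b⁻¹ y := by
      simp [Equiv.Perm.mul_apply, hz]
    have := huniq ⟨b⁻¹ * ζ * b, hζ⟩ happ
    have hcoe : b⁻¹ * ζ * b = (η : Equiv.Perm G) := congrArg Subtype.val this
    apply Subtype.ext
    show ζ = b * (η : Equiv.Perm G) * b⁻¹
    rw [← hcoe]; group

/-- `λ(G) ≃* G`. -/
noncomputable def lamGEquiv (G : Type*) [Group G] : lamG G ≃* G :=
  (MonoidHom.ofInjective (lam_injective (G := G))).symm

lemma exists_conj_of_regular {N : Subgroup (Equiv.Perm G)} (hreg : IsRegularSubgroup N)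
    (φ : N ≃* G) : ∃ β : Equiv.Perm G, conjSub β (lamG G) = N := by
  classical
  set b : G → G := fun g => ((φ.symm g : N) : Equiv.Perm G) 1 with hb
  have hbij : Function.Bijective b := by
    constructor
    · intro g g' h
      have := (hreg 1 (b g)).unique (rfl) (by rw [h])
      -- this : φ.symm g = φ.symm g'
      have := congrArg φ this
      simpa using this
    · intro y
      obtain ⟨η, hη, -⟩ := hreg 1 y
      refine ⟨φ η, ?_⟩
      simp only [hb, MulEquiv.symm_apply_apply]
      exact hη
  set β : Equiv.Perm G := Equiv.ofBijective b hbij with hβ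
  have key : ∀ g : G, β * (MulAction.toPermHom G G g) * β⁻¹ = ((φ.symm g : N) : Equiv.Perm G) := by
    intro g
    ext h
    have h1 : (β * (MulAction.toPermHom G G g) * β⁻¹) h = b (g * β⁻¹ h) := rfl
    rw [h1]
    have h2 : b (g * β⁻¹ h) = ((φ.symm (g * β⁻¹ h) : N) : Equiv.Perm G) 1 := rfl
    have h3 : ((φ.symm (g * β⁻¹ h) : N) : Equiv.Perm G)
        = ((φ.symm g : N) : Equiv.Perm G) * ((φ.symm (β⁻¹ h) : N) : Equiv.Perm G) := by
      rw [map_mul]; rfl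
    have h4 : ((φ.symm (β⁻¹ h) : N) : Equiv.Perm G) 1 = b (β⁻¹ h) := rfl
    have h5 : b (β⁻¹ h) = β (β⁻¹ h) := rfl
    rw [h2, h3, Equiv.Perm.mul_apply, h4, h5, Equiv.Perm.inv_def, Equiv.apply_symm_apply]
  refine ⟨β, ?_⟩
  ext x
  constructor
  · rintro ⟨p, ⟨g, rfl⟩, rfl⟩
    have : (MulAut.conj β).toMonoidHom (MulAction.toPermHom G G g)
        = β * (MulAction.toPermHom G G g) * β⁻¹ := rfl
    rw [this, key g]
    exact (φ.symm g).2
  · intro hx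
    refine ⟨MulAction.toPermHom G G (φ ⟨x, hx⟩), ⟨φ ⟨x, hx⟩, rfl⟩, ?_⟩
    show β * (MulAction.toPermHom G G (φ ⟨x, hx⟩)) * β⁻¹ = x
    rw [key]
    simp

/-- The main equality: `H(G)` is the conjugation orbit of `λ(G)` under `NHol(G)`. -/
lemma hclass_eq (G : Type*) [Group G] :
    HClass G = {N | ∃ β ∈ Subgroup.normalizer (Hol G : Set (Equiv.Perm G)), conjSub β (lamG G) = N} := by
  ext N
  constructor
  · rintro ⟨hreg, ⟨φ⟩, hnorm⟩
    obtain ⟨β, hβ⟩ := exists_conj_of_regular hreg φ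
    refine ⟨β, ?_, hβ⟩
    have h1 : Subgroup.normalizer (conjSub β (lamG G) : Set (Equiv.Perm G)) = conjSub β (Hol G) :=
      conjSub_normalizer β (lamG G)
    rw [hβ, hnorm] at h1
    exact conjSub_eq_self_iff.mp h1.symm
  · rintro ⟨β, hβ, rfl⟩
    refine ⟨isRegular_conjSub (isRegular_lamG G), ⟨?_⟩, ?_⟩
    · exact ((MulEquiv.subgroupMap (MulAut.conj β : Equiv.Perm G ≃* Equiv.Perm G)
        (lamG G)).symm.trans (lamGEquiv G))
    · rw [conjSub_normalizer]
      exact conjSub_eq_self_iff.mpr hβ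

end Main

/-- `H(G)` is the conjugation orbit of `λ(G)` under `NHol(G) = Norm_B(Hol(G))`, and
`|H(G)|` is the index `[NHol(G) : Hol(G)]`. -/
theorem HClass_eq_orbit_NHol (G : Type*) [Group G] [Finite G] :
    HClass G = {N | ∃ β ∈ Subgroup.normalizer (Hol G : Set (Equiv.Perm G)), conjSub β (lamG G) = N} ∧
      (HClass G).ncard = (Hol G).relIndex (Subgroup.normalizer (Hol G : Set (Equiv.Perm G))) := by
  classical
  refine ⟨hclass_eq G, ?_⟩
  rw [hclass_eq G]
  set K := Subgroup.normalizer (Hol G : Set (Equiv.Perm G)) with hK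
  set H' := (Hol G).subgroupOf K with hH'
  set S : Set (Subgroup (Equiv.Perm G)) :=
    {N | ∃ β ∈ K, conjSub β (lamG G) = N} with hS
  have coe_mul : ∀ a b : K, ((a⁻¹ * b : K) : Equiv.Perm G)
      = (a : Equiv.Perm G)⁻¹ * (b : Equiv.Perm G) := by
    intro a b; push_cast; rfl
  have wd : ∀ a b : K, (a : Equiv.Perm G)⁻¹ * (b : Equiv.Perm G) ∈ Hol G →
      conjSub (a : Equiv.Perm G) (lamG G) = conjSub (b : Equiv.Perm G) (lamG G) := by
    intro a b hab
    have hmem : (a : Equiv.Perm G)⁻¹ * (b : Equiv.Perm G) ∈ Subgroup.normalizer (lamG G : Set (Equiv.Perm G)) := hab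
    have h1 : conjSub ((a : Equiv.Perm G)⁻¹ * b) (lamG G) = lamG G :=
      conjSub_eq_self_iff.mpr hmem
    have h2 := congrArg (conjSub (a : Equiv.Perm G)) h1
    rw [conjSub_conjSub,
        show (a : Equiv.Perm G) * ((a : Equiv.Perm G)⁻¹ * (b : Equiv.Perm G))
          = (b : Equiv.Perm G) by group] at h2
    exact h2.symm
  set f : K ⧸ H' → S := fun q =>
    Quotient.liftOn' q (fun β => (⟨conjSub (β : Equiv.Perm G) (lamG G), β, β.2, rfl⟩ : S))
      (fun a b hab => Subtype.ext (wd a b (by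
        have h := QuotientGroup.leftRel_apply.mp hab
        rw [Subgroup.mem_subgroupOf] at h
        rwa [coe_mul a b] at h))) with hf
  have hbij : Function.Bijective f := by
    constructor
    · intro q q'
      induction q using Quotient.inductionOn'
      induction q' using Quotient.inductionOn'
      rename_i a b
      intro h
      have h' : conjSub (a : Equiv.Perm G) (lamG G) = conjSub (b : Equiv.Perm G) (lamG G) :=
        congrArg Subtype.val h
      apply Quotient.sound'
      rw [QuotientGroup.leftRel_apply, Subgroup.mem_subgroupOf]
      have h2 : conjSub ((a : Equiv.Perm G)⁻¹) (conjSub (a : Equiv.Perm G) (lamG G))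
          = conjSub ((a : Equiv.Perm G)⁻¹) (conjSub (b : Equiv.Perm G) (lamG G)) := by rw [h']
      rw [conjSub_conjSub, conjSub_conjSub, inv_mul_cancel, conjSub_one] at h2
      have h3 : (a : Equiv.Perm G)⁻¹ * (b : Equiv.Perm G) ∈ Subgroup.normalizer (lamG G : Set (Equiv.Perm G)) :=
        conjSub_eq_self_iff.mp h2.symm
      show ((a⁻¹ * b : K) : Equiv.Perm G) ∈ Hol G
      rw [coe_mul a b]
      exact h3
    · rintro ⟨N, β, hβ, rfl⟩
      exact ⟨Quotient.mk'' ⟨β, hβ⟩, rfl⟩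
  have hcard : Nat.card S = Nat.card (K ⧸ H') :=
    Nat.card_congr (Equiv.ofBijective f hbij).symm
  rw [← Nat.card_coe_set_eq, hcard]
  rfl
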